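/- For n = 4 players, there exists a cake instance where every envy-free complete connected division has egalitarian welfare at most 1/4 + 2ε, while some envy-free partial connected division has egalitarian welfare at least 1/2 - 2ε; hence the egalitarian dumping paradox for 4 players can be made arbitrarily close to 2. -/

import Mathlib

open MeasureTheory Set
open scoped ENNReal

/-- A connected division of the cake `[0,1]` among `n` players: each player gets an
open interval, the intervals are pairwise disjoint and contained in `[0,1]`. -/
structure ConnDiv (n : ℕ) where
  pieces : Fin n → Set ℝ
  isInterval : ∀ i, ∃ a b : ℝ, pieces i = Set.Ioo a b
  subset : ∀ i, pieces i ⊆ Set.Icc (0:ℝ) 1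
  disj : Pairwise fun i j => Disjoint (pieces i) (pieces j)

/-- A connected division is complete if the closures of the pieces cover `[0,1]`. -/
def ConnDiv.Complete {n : ℕ} (d : ConnDiv n) : Prop :=
  Set.Icc (0:ℝ) 1 ⊆ ⋃ i, closure (d.pieces i)

/-- Envy-freeness: every player weakly prefers her own piece. -/
def EnvyFree {n : ℕ} (v : Fin n → Measure ℝ) (d : ConnDiv n) : Prop :=
  ∀ i j, v i (d.pieces j) ≤ v i (d.pieces i)

/-- Utilitarian welfare: sum of own-piece values. -/
noncomputable def util {n : ℕ} (v : Fin n → Measure ℝ) (d : ConnDiv n) : ℝ≥0∞ :=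
  ∑ i, v i (d.pieces i)

/-- Egalitarian welfare: minimum own-piece value. -/
noncomputable def egal {n : ℕ} (v : Fin n → Measure ℝ) (d : ConnDiv n) : ℝ≥0∞ :=
  ⨅ i, v i (d.pieces i)

/-- The uniform measure of total mass `m` on the interval `(a,b)`. -/
noncomputable def unifOn (a b m : ℝ) : Measure ℝ :=
  ENNReal.ofReal (m / (b - a)) • volume.restrict (Set.Ioo a b)

/-- Player 1's measure: `1/2 - ε` on `(0,ε)`, `3ε` on `(3/4, 3/4+3ε)`,
`1/2 - 2ε` on `(1-ε,1)`, uniform within each interval. -/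
noncomputable def q1 (ε : ℝ) : Measure ℝ :=
  unifOn 0 ε (1/2 - ε) + unifOn (3/4) (3/4 + 3*ε) (3*ε) + unifOn (1-ε) 1 (1/2 - 2*ε)

/-- Player 2's measure: `3ε` on `(ε,2ε)`, `1/2 - 2ε` on `(1/4-ε, 1/4)`,
`1/2 - ε` on `(1/2, 1/2+ε)`, uniform within each interval. -/
noncomputable def q2 (ε : ℝ) : Measure ℝ :=
  unifOn ε (2*ε) (3*ε) + unifOn (1/4 - ε) (1/4) (1/2 - 2*ε) +
    unifOn (1/2) (1/2 + ε) (1/2 - ε)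

/-- The uniform (Lebesgue) measure on `[0,1]` (players 3 and 4). -/
noncomputable def qU : Measure ℝ := volume.restrict (Set.Icc (0:ℝ) 1)

noncomputable def vEg4' (ε : ℝ) : Fin 4 → Measure ℝ := ![q1 ε, q2 ε, qU, qU]

lemma unifOn_apply (a b m : ℝ) (S : Set ℝ) :
    unifOn a b m S = ENNReal.ofReal (m/(b-a)) * volume (S ∩ Set.Ioo a b) := by
  simp [unifOn, Measure.smul_apply, Measure.restrict_apply' measurableSet_Ioo, smul_eq_mul]

lemma unifOn_eq_of_subset {a b m : ℝ} (hab : a < b) (hm : 0 ≤ m) {S : Set ℝ}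
    (h : Set.Ioo a b ⊆ S) : unifOn a b m S = ENNReal.ofReal m := by
  rw [unifOn_apply, Set.inter_eq_self_of_subset_right h, Real.volume_Ioo,
    ← ENNReal.ofReal_mul (div_nonneg hm (by linarith)),
    div_mul_cancel₀ m (by linarith : b - a ≠ 0)]

lemma unifOn_le (a b m : ℝ) (hab : a < b) (hm : 0 ≤ m) (S : Set ℝ) :
    unifOn a b m S ≤ ENNReal.ofReal m :=
  (measure_mono (Set.subset_univ S)).trans_eq
    (unifOn_eq_of_subset hab hm (Set.subset_univ _))

lemma unifOn_Ioo (a b m c e : ℝ) :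
    unifOn a b m (Set.Ioo c e) =
      ENNReal.ofReal (m/(b-a)) * ENNReal.ofReal (min e b - max c a) := by
  rw [unifOn_apply, Set.Ioo_inter_Ioo, Real.volume_Ioo]

lemma mm1 {a c e : ℝ} (b : ℝ) (h : e ≤ a) : min e b ≤ max c a :=
  (min_le_left _ _).trans (h.trans (le_max_right _ _))

lemma mm2 {b c e : ℝ} (a : ℝ) (h : b ≤ c) : min e b ≤ max c a :=
  (min_le_right _ _).trans (h.trans (le_max_left _ _))

lemma unifOn_zero_Ioo {a b m c e : ℝ} (h : min e b ≤ max c a) :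
    unifOn a b m (Set.Ioo c e) = 0 := by
  rw [unifOn_apply, Set.Ioo_inter_Ioo, Set.Ioo_eq_empty (not_lt.mpr h)]
  simp

lemma unifOn_zero_disj {a b m : ℝ} {S : Set ℝ} (h : S ∩ Set.Ioo a b = ∅) :
    unifOn a b m S = 0 := by
  rw [unifOn_apply, h]; simp

lemma q1_apply (ε : ℝ) (S : Set ℝ) : q1 ε S =
    unifOn 0 ε (1/2 - ε) S + unifOn (3/4) (3/4 + 3*ε) (3*ε) S
      + unifOn (1-ε) 1 (1/2 - 2*ε) S := by
  simp [q1]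

lemma q2_apply (ε : ℝ) (S : Set ℝ) : q2 ε S =
    unifOn ε (2*ε) (3*ε) S + unifOn (1/4 - ε) (1/4) (1/2 - 2*ε) S
      + unifOn (1/2) (1/2 + ε) (1/2 - ε) S := by
  simp [q2]

lemma qU_Ioo {a b : ℝ} (h : Set.Ioo a b ⊆ Set.Icc 0 1) :
    qU (Set.Ioo a b) = ENNReal.ofReal (b - a) := by
  rw [qU, Measure.restrict_apply' measurableSet_Icc, Set.inter_eq_self_of_subset_left h,
    Real.volume_Ioo]

section
variable {ε : ℝ} (hε : 0 < ε) (hε' : ε < 1/100)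
include hε hε'

lemma E1 : q1 ε (Set.Ioo 0 (2*ε)) = ENNReal.ofReal (1/2 - ε) := by
  rw [q1_apply,
    unifOn_eq_of_subset (by linarith) (by linarith) (Set.Ioo_subset_Ioo le_rfl (by linarith)),
    unifOn_zero_Ioo (mm1 _ (by linarith)), unifOn_zero_Ioo (mm1 _ (by linarith))]
  simp

lemma E2 : q1 ε (Set.Ioo (2*ε) (1/2)) = 0 := by
  rw [q1_apply, unifOn_zero_Ioo (mm2 _ (by linarith)),
    unifOn_zero_Ioo (mm1 _ (by linarith)), unifOn_zero_Ioo (mm1 _ (by linarith))]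
  simp

lemma E3 : q1 ε (Set.Ioo (1/2) (1/2+ε)) = 0 := by
  rw [q1_apply, unifOn_zero_Ioo (mm2 _ (by linarith)),
    unifOn_zero_Ioo (mm1 _ (by linarith)), unifOn_zero_Ioo (mm1 _ (by linarith))]
  simp

lemma E4 : q1 ε (Set.Ioo (1/2+ε) (1-ε)) = ENNReal.ofReal (3*ε) := by
  rw [q1_apply, unifOn_zero_Ioo (mm2 _ (by linarith)),
    unifOn_eq_of_subset (by linarith) (by linarith)
      (Set.Ioo_subset_Ioo (by linarith) (by linarith)),
    unifOn_zero_Ioo (mm1 _ (by linarith))]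
  simp

lemma E5 : q2 ε (Set.Ioo 0 (2*ε)) = ENNReal.ofReal (3*ε) := by
  rw [q2_apply,
    unifOn_eq_of_subset (by linarith) (by linarith)
      (Set.Ioo_subset_Ioo (by linarith) le_rfl),
    unifOn_zero_Ioo (mm1 _ (by linarith)), unifOn_zero_Ioo (mm1 _ (by linarith))]
  simp

lemma E6 : q2 ε (Set.Ioo (2*ε) (1/2)) = ENNReal.ofReal (1/2 - 2*ε) := by
  rw [q2_apply, unifOn_zero_Ioo (mm2 _ (by linarith)),
    unifOn_eq_of_subset (by linarith) (by linarith)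
      (Set.Ioo_subset_Ioo (by linarith) (by linarith)),
    unifOn_zero_Ioo (mm1 _ (by linarith))]
  simp

lemma E7 : q2 ε (Set.Ioo (1/2) (1/2+ε)) = ENNReal.ofReal (1/2 - ε) := by
  rw [q2_apply, unifOn_zero_Ioo (mm2 _ (by linarith)),
    unifOn_zero_Ioo (mm2 _ (by linarith)),
    unifOn_eq_of_subset (by linarith) (by linarith) le_rfl.subset]
  simp

lemma E8 : q2 ε (Set.Ioo (1/2+ε) (1-ε)) = 0 := by
  rw [q2_apply, unifOn_zero_Ioo (mm2 _ (by linarith)),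
    unifOn_zero_Ioo (mm2 _ (by linarith)), unifOn_zero_Ioo (mm2 _ (by linarith))]
  simp


-- exact key value: q2 on (0, 1/4 - ε/2)

lemma K1 : q2 ε (Set.Ioo 0 (1/4 - ε/2)) = ENNReal.ofReal (1/4 + 2*ε) := by
  rw [q2_apply,
    unifOn_eq_of_subset (by linarith) (by linarith)
      (Set.Ioo_subset_Ioo (by linarith) (by linarith)),
    unifOn_Ioo, unifOn_zero_Ioo (mm1 _ (by linarith))]
  rw [min_eq_left (by linarith), max_eq_right (by linarith),
    ← ENNReal.ofReal_mul (div_nonneg (by linarith) (by linarith))]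
  rw [show (1/2 - 2*ε) / (1/4 - (1/4 - ε)) * (1/4 - ε/2 - (1/4 - ε)) = 1/4 - ε by
    field_simp; ring]
  rw [← ENNReal.ofReal_add (by linarith) (by linarith), add_zero]
  congr 1; ring

lemma K2 : q1 ε (Set.Ioo (3/4 + 3*ε) 1) = ENNReal.ofReal (1/2 - 2*ε) := by
  rw [q1_apply, unifOn_zero_Ioo (mm2 _ (by linarith)),
    unifOn_zero_Ioo (mm2 _ (by linarith)),
    unifOn_eq_of_subset (by linarith) (by linarith)
      (Set.Ioo_subset_Ioo (by linarith) le_rfl)]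
  simp

lemma K3 {a : ℝ} (ha : 1/2 + ε ≤ a) : q2 ε (Set.Ioo a 1) = 0 := by
  rw [q2_apply, unifOn_zero_Ioo (mm2 _ (by linarith)),
    unifOn_zero_Ioo (mm2 _ (by linarith)), unifOn_zero_Ioo (mm2 _ (by linarith))]
  simp

lemma K4 {a : ℝ} (ha : a ≤ 3/4) : ENNReal.ofReal (1/2 + ε) ≤ q1 ε (Set.Ioo a 1) := by
  rw [q1_apply,
    unifOn_eq_of_subset (by linarith) (by linarith)
      (Set.Ioo_subset_Ioo ha (by linarith)),
    unifOn_eq_of_subset (by linarith) (by linarith)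
      (Set.Ioo_subset_Ioo (by linarith) le_rfl), add_assoc,
    ← ENNReal.ofReal_add (by linarith) (by linarith)]
  calc ENNReal.ofReal (1/2 + ε) = ENNReal.ofReal (3*ε + (1/2 - 2*ε)) := by congr 1; ring
    _ ≤ _ := le_add_self

lemma K5 {b : ℝ} (hb : 1/4 ≤ b) : ENNReal.ofReal (1/2 + ε) ≤ q2 ε (Set.Ioo 0 b) := by
  rw [q2_apply,
    unifOn_eq_of_subset (by linarith) (by linarith)
      (Set.Ioo_subset_Ioo (by linarith) (by linarith)),
    unifOn_eq_of_subset (by linarith) (by linarith)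
      (Set.Ioo_subset_Ioo (by linarith) hb),
    ← ENNReal.ofReal_add (by linarith) (by linarith)]
  calc ENNReal.ofReal (1/2 + ε) = ENNReal.ofReal (3*ε + (1/2 - 2*ε)) := by congr 1; ring
    _ ≤ _ := le_self_add

lemma K6 {S : Set ℝ} (h1 : S ∩ Set.Ioo (3/4) (3/4 + 3*ε) = ∅)
    (h2 : S ∩ Set.Ioo (1-ε) 1 = ∅) : q1 ε S ≤ ENNReal.ofReal (1/2 - ε) := by
  rw [q1_apply, unifOn_zero_disj h1, unifOn_zero_disj h2, add_zero, add_zero]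
  exact unifOn_le _ _ _ (by linarith) (by linarith) _

lemma K7 {S : Set ℝ} (h1 : S ∩ Set.Ioo ε (2*ε) = ∅)
    (h2 : S ∩ Set.Ioo (1/4 - ε) (1/4) = ∅) : q2 ε S ≤ ENNReal.ofReal (1/2 - ε) := by
  rw [q2_apply, unifOn_zero_disj h1, unifOn_zero_disj h2, zero_add, zero_add]
  exact unifOn_le _ _ _ (by linarith) (by linarith) _

lemma K8 {b : ℝ} (hb : ε ≤ b) : ENNReal.ofReal (1/2 - ε) ≤ q1 ε (Set.Ioo 0 b) := by
  rw [q1_apply,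
    unifOn_eq_of_subset (by linarith) (by linarith)
      (Set.Ioo_subset_Ioo le_rfl hb)]
  exact le_add_of_le_of_nonneg (le_add_of_le_of_nonneg le_rfl zero_le) zero_le

end

lemma piece_measurable {n : ℕ} (d : ConnDiv n) (i : Fin n) :
    MeasurableSet (d.pieces i) := by
  obtain ⟨a, b, h⟩ := d.isInterval i
  rw [h]; exact measurableSet_Ioo

lemma sum_vol_le (d : ConnDiv 4) : ∑ i, volume (d.pieces i) ≤ 1 := by
  rw [← tsum_fintype (L := .unconditional _), ← measure_iUnion d.disj (piece_measurable d)]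
  calc volume (⋃ i, d.pieces i) ≤ volume (Set.Icc (0:ℝ) 1) :=
        measure_mono (Set.iUnion_subset d.subset)
    _ = 1 := by rw [Real.volume_Icc]; norm_num

lemma exists_rightmost (d : ConnDiv 4) (hc : d.Complete) :
    ∃ i a, a < 1 ∧ d.pieces i = Set.Ioo a 1 := by
  have h1 : (1:ℝ) ∈ ⋃ i, closure (d.pieces i) := hc (by norm_num)
  rw [Set.mem_iUnion] at h1
  obtain ⟨i, hi⟩ := h1
  obtain ⟨a, b, heq⟩ := d.isInterval i
  rw [heq] at hi
  rcases le_or_gt b a with hba | hab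
  · rw [Set.Ioo_eq_empty (not_lt.mpr hba)] at hi; simp at hi
  · rw [closure_Ioo hab.ne] at hi
    have hb1 : b ≤ 1 := by
      by_contra h; push_neg at h
      have ht : (max a 1 + b)/2 ∈ Set.Ioo a b := by
        constructor
        · calc a ≤ max a 1 := le_max_left _ _
            _ < _ := by have := max_lt hab h; linarith [this]
        · have := max_lt hab h; linarith [this]
      have := (d.subset i (heq ▸ ht)).2
      have : (1:ℝ) ≤ max a 1 := le_max_right _ _
      linarith [le_max_right a 1, (d.subset i (heq ▸ ht)).2,
        (max_lt hab h)]
    have : b = 1 := le_antisymm hb1 hi.2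
    exact ⟨i, a, by rw [← this]; exact hab, by rw [heq, this]⟩

lemma exists_leftmost (d : ConnDiv 4) (hc : d.Complete) :
    ∃ i b, 0 < b ∧ d.pieces i = Set.Ioo 0 b := by
  have h1 : (0:ℝ) ∈ ⋃ i, closure (d.pieces i) := hc (by norm_num)
  rw [Set.mem_iUnion] at h1
  obtain ⟨i, hi⟩ := h1
  obtain ⟨a, b, heq⟩ := d.isInterval i
  rw [heq] at hi
  rcases le_or_gt b a with hba | hab
  · rw [Set.Ioo_eq_empty (not_lt.mpr hba)] at hi; simp at hi
  · rw [closure_Ioo hab.ne] at hi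
    have ha0 : 0 ≤ a := by
      by_contra h; push_neg at h
      have hm : a < min b 0 := lt_min hab h
      have ht : (a + min b 0)/2 ∈ Set.Ioo a b := by
        constructor
        · linarith
        · have : min b 0 ≤ b := min_le_left _ _; linarith
      have := (d.subset i (heq ▸ ht)).1
      have : min b 0 ≤ 0 := min_le_right _ _
      linarith
    have : a = 0 := le_antisymm hi.1 ha0
    exact ⟨i, b, by rw [← this]; exact hab, by rw [heq, this]⟩

lemma ofReal_max (x : ℝ) : ENNReal.ofReal x = ENNReal.ofReal (max x 0) := by
  rcases le_total x 0 with h | h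
  · rw [ENNReal.ofReal_eq_zero.mpr h, max_eq_right h]; simp
  · rw [max_eq_left h]

lemma inter_block_empty {S T B : Set ℝ} (hd : Disjoint S T) (hB : B ⊆ T) :
    S ∩ B = ∅ :=
  Set.eq_empty_iff_forall_notMem.mpr fun x hx =>
    (Set.disjoint_left.mp hd hx.1) (hB hx.2)

lemma hU_eq (d : ConnDiv 4) (k : Fin 4) : qU (d.pieces k) = volume (d.pieces k) := by
  rw [qU, Measure.restrict_apply' measurableSet_Icc,
    Set.inter_eq_self_of_subset_left (d.subset k)]

set_option maxHeartbeats 2000000 in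
lemma part1 {ε : ℝ} (hε : 0 < ε) (hε' : ε < 1/100) (d : ConnDiv 4)
    (hc : d.Complete) (hef : EnvyFree (vEg4' ε) d) :
    egal (vEg4' ε) d ≤ ENNReal.ofReal (1/4 + 2*ε) := by
  by_contra hcon
  push_neg at hcon
  have hv : ∀ i, ENNReal.ofReal (1/4 + 2*ε) < vEg4' ε i (d.pieces i) :=
    fun i => hcon.trans_le (iInf_le _ i)
  -- real lengths of the four pieces
  obtain ⟨a0, b0, h0⟩ := d.isInterval 0
  obtain ⟨a1, b1, h1⟩ := d.isInterval 1
  obtain ⟨a2, b2, h2⟩ := d.isInterval 2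
  obtain ⟨a3, b3, h3⟩ := d.isInterval 3
  set L0 : ℝ := max (b0 - a0) 0 with hL0def
  set L1 : ℝ := max (b1 - a1) 0 with hL1def
  set L2 : ℝ := max (b2 - a2) 0 with hL2def
  set L3 : ℝ := max (b3 - a3) 0 with hL3def
  have hvol0 : volume (d.pieces 0) = ENNReal.ofReal L0 := by
    rw [h0, Real.volume_Ioo, ofReal_max]
  have hvol1 : volume (d.pieces 1) = ENNReal.ofReal L1 := by
    rw [h1, Real.volume_Ioo, ofReal_max]
  have hvol2 : volume (d.pieces 2) = ENNReal.ofReal L2 := by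
    rw [h2, Real.volume_Ioo, ofReal_max]
  have hvol3 : volume (d.pieces 3) = ENNReal.ofReal L3 := by
    rw [h3, Real.volume_Ioo, ofReal_max]
  have hL0n : 0 ≤ L0 := le_max_right _ _
  have hL1n : 0 ≤ L1 := le_max_right _ _
  have hL2n : 0 ≤ L2 := le_max_right _ _
  have hL3n : 0 ≤ L3 := le_max_right _ _
  have hsumR : L0 + L1 + L2 + L3 ≤ 1 := by
    have hs := sum_vol_le d
    rw [Fin.sum_univ_four, hvol0, hvol1, hvol2, hvol3,
      ← ENNReal.ofReal_add hL0n hL1n, ← ENNReal.ofReal_add (by linarith) hL2n,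
      ← ENNReal.ofReal_add (by linarith) hL3n,
      show (1:ℝ≥0∞) = ENNReal.ofReal 1 from ENNReal.ofReal_one.symm] at hs
    exact (ENNReal.ofReal_le_ofReal_iff (by norm_num)).mp hs
  have hL2R : 1/4 + 2*ε < L2 := by
    have h := hv 2
    rw [show vEg4' ε 2 = qU from rfl, hU_eq d 2, hvol2] at h
    exact (ENNReal.ofReal_lt_ofReal_iff_of_nonneg (by linarith)).mp h
  have hL3R : 1/4 + 2*ε < L3 := by
    have h := hv 3
    rw [show vEg4' ε 3 = qU from rfl, hU_eq d 3, hvol3] at h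
    exact (ENNReal.ofReal_lt_ofReal_iff_of_nonneg (by linarith)).mp h
  have hL0small : L0 ≤ 1/2 - 4*ε := by linarith
  have hL1small : L1 ≤ 1/2 - 4*ε := by linarith
  -- rightmost piece
  obtain ⟨i, a, ha1, hpi⟩ := exists_rightmost d hc
  have hi1 : i ≠ 1 := by
    rintro rfl
    have h := hv 1
    rw [show vEg4' ε 1 = q2 ε from rfl, hpi] at h
    rcases le_or_gt (1/2 + ε) a with hA | hA
    · rw [K3 hε hε' hA] at h
      simp at h
    · have he : ENNReal.ofReal (1 - a) = ENNReal.ofReal L1 := by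
        rw [← Real.volume_Ioo, ← hpi, hvol1]
      have : 1 - a = L1 :=
        (ENNReal.ofReal_eq_ofReal_iff (by linarith) hL1n).mp he
      linarith
  have hi2 : i ≠ 2 := by
    rintro rfl
    have h := hv 2
    rw [show vEg4' ε 2 = qU from rfl, hU_eq d 2, hpi, Real.volume_Ioo] at h
    have ha : a < 3/4 - 2*ε := by
      have := (ENNReal.ofReal_lt_ofReal_iff_of_nonneg (by linarith)).mp h
      linarith
    have hge : ENNReal.ofReal (1/2 + ε) ≤ q1 ε (d.pieces 2) := by
      rw [hpi]; exact K4 hε hε' (by linarith)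
    have henvy := hef 0 2
    rw [show vEg4' ε 0 = q1 ε from rfl] at henvy
    have hdisj := d.disj (show (0:Fin 4) ≠ 2 by decide)
    have hB : d.pieces 0 ∩ Set.Ioo (3/4) (3/4 + 3*ε) = ∅ :=
      inter_block_empty hdisj
        (hpi ▸ Set.Ioo_subset_Ioo (by linarith) (by linarith))
    have hC : d.pieces 0 ∩ Set.Ioo (1 - ε) 1 = ∅ :=
      inter_block_empty hdisj
        (hpi ▸ Set.Ioo_subset_Ioo (by linarith) le_rfl)
    have hup := K6 hε hε' hB hC
    have : (1:ℝ)/2 + ε ≤ 1/2 - ε :=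
      (ENNReal.ofReal_le_ofReal_iff (by linarith)).mp
        ((hge.trans henvy).trans hup)
    linarith
  have hi3 : i ≠ 3 := by
    rintro rfl
    have h := hv 3
    rw [show vEg4' ε 3 = qU from rfl, hU_eq d 3, hpi, Real.volume_Ioo] at h
    have ha : a < 3/4 - 2*ε := by
      have := (ENNReal.ofReal_lt_ofReal_iff_of_nonneg (by linarith)).mp h
      linarith
    have hge : ENNReal.ofReal (1/2 + ε) ≤ q1 ε (d.pieces 3) := by
      rw [hpi]; exact K4 hε hε' (by linarith)
    have henvy := hef 0 3
    rw [show vEg4' ε 0 = q1 ε from rfl] at henvy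
    have hdisj := d.disj (show (0:Fin 4) ≠ 3 by decide)
    have hB : d.pieces 0 ∩ Set.Ioo (3/4) (3/4 + 3*ε) = ∅ :=
      inter_block_empty hdisj
        (hpi ▸ Set.Ioo_subset_Ioo (by linarith) (by linarith))
    have hC : d.pieces 0 ∩ Set.Ioo (1 - ε) 1 = ∅ :=
      inter_block_empty hdisj
        (hpi ▸ Set.Ioo_subset_Ioo (by linarith) le_rfl)
    have hup := K6 hε hε' hB hC
    have : (1:ℝ)/2 + ε ≤ 1/2 - ε :=
      (ENNReal.ofReal_le_ofReal_iff (by linarith)).mp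
        ((hge.trans henvy).trans hup)
    linarith
  have hi0 : i = 0 := by
    fin_cases i
    · rfl
    · exact absurd rfl hi1
    · exact absurd rfl hi2
    · exact absurd rfl hi3
  subst hi0
  -- length of piece 0 is 1 - a, so a ≥ 1/2 + 4ε
  have hL0a : L0 = 1 - a := by
    have he : ENNReal.ofReal (1 - a) = ENNReal.ofReal L0 := by
      rw [← Real.volume_Ioo, ← hpi, hvol0]
    exact ((ENNReal.ofReal_eq_ofReal_iff (by linarith) hL0n).mp he).symm
  have haBig : 1/2 + 4*ε ≤ a := by linarith
  -- leftmost piece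
  obtain ⟨j, b, hb0, hpj⟩ := exists_leftmost d hc
  have hj0 : j ≠ 0 := by
    rintro rfl
    have heq : Set.Ioo a 1 = Set.Ioo 0 b := by rw [← hpi, hpj]
    have hm1 : (a + 1)/2 ∈ Set.Ioo (0:ℝ) b := by
      rw [← heq]; exact ⟨by linarith, by linarith⟩
    have hm2 : a/2 ∈ Set.Ioo a 1 := by
      rw [heq]
      exact ⟨by linarith, by linarith [hm1.2]⟩
    have := hm2.1
    linarith
  have hj2 : j ≠ 2 := by
    rintro rfl
    have h := hv 2
    rw [show vEg4' ε 2 = qU from rfl, hU_eq d 2, hpj, Real.volume_Ioo] at h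
    have hb : 1/4 + 2*ε < b := by
      have := (ENNReal.ofReal_lt_ofReal_iff_of_nonneg (by linarith)).mp h
      linarith
    have hge : ENNReal.ofReal (1/2 + ε) ≤ q2 ε (d.pieces 2) := by
      rw [hpj]; exact K5 hε hε' (by linarith)
    have henvy := hef 1 2
    rw [show vEg4' ε 1 = q2 ε from rfl] at henvy
    have hdisj := d.disj (show (1:Fin 4) ≠ 2 by decide)
    have hD : d.pieces 1 ∩ Set.Ioo ε (2*ε) = ∅ :=
      inter_block_empty hdisj
        (hpj ▸ Set.Ioo_subset_Ioo (by linarith) (by linarith))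
    have hE : d.pieces 1 ∩ Set.Ioo (1/4 - ε) (1/4) = ∅ :=
      inter_block_empty hdisj
        (hpj ▸ Set.Ioo_subset_Ioo (by linarith) (by linarith))
    have hup := K7 hε hε' hD hE
    have : (1:ℝ)/2 + ε ≤ 1/2 - ε :=
      (ENNReal.ofReal_le_ofReal_iff (by linarith)).mp
        ((hge.trans henvy).trans hup)
    linarith
  have hj3 : j ≠ 3 := by
    rintro rfl
    have h := hv 3
    rw [show vEg4' ε 3 = qU from rfl, hU_eq d 3, hpj, Real.volume_Ioo] at h
    have hb : 1/4 + 2*ε < b := by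
      have := (ENNReal.ofReal_lt_ofReal_iff_of_nonneg (by linarith)).mp h
      linarith
    have hge : ENNReal.ofReal (1/2 + ε) ≤ q2 ε (d.pieces 3) := by
      rw [hpj]; exact K5 hε hε' (by linarith)
    have henvy := hef 1 3
    rw [show vEg4' ε 1 = q2 ε from rfl] at henvy
    have hdisj := d.disj (show (1:Fin 4) ≠ 3 by decide)
    have hD : d.pieces 1 ∩ Set.Ioo ε (2*ε) = ∅ :=
      inter_block_empty hdisj
        (hpj ▸ Set.Ioo_subset_Ioo (by linarith) (by linarith))
    have hE : d.pieces 1 ∩ Set.Ioo (1/4 - ε) (1/4) = ∅ :=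
      inter_block_empty hdisj
        (hpj ▸ Set.Ioo_subset_Ioo (by linarith) (by linarith))
    have hup := K7 hε hε' hD hE
    have : (1:ℝ)/2 + ε ≤ 1/2 - ε :=
      (ENNReal.ofReal_le_ofReal_iff (by linarith)).mp
        ((hge.trans henvy).trans hup)
    linarith
  have hj1 : j = 1 := by
    fin_cases j
    · exact absurd rfl hj0
    · rfl
    · exact absurd rfl hj2
    · exact absurd rfl hj3
  subst hj1
  have hL1b : L1 = b := by
    have he : ENNReal.ofReal b = ENNReal.ofReal L1 := by
      rw [show ENNReal.ofReal b = ENNReal.ofReal (b - 0) by norm_num,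
        ← Real.volume_Ioo, ← hpj, hvol1]
    exact ((ENNReal.ofReal_eq_ofReal_iff (by linarith) hL1n).mp he).symm
  -- b > 1/4 - ε/2
  have hbBig : 1/4 - ε/2 < b := by
    by_contra hble
    push_neg at hble
    have h := hv 1
    rw [show vEg4' ε 1 = q2 ε from rfl, hpj] at h
    have hmono : q2 ε (Set.Ioo 0 b) ≤ q2 ε (Set.Ioo 0 (1/4 - ε/2)) :=
      measure_mono (Set.Ioo_subset_Ioo le_rfl hble)
    rw [K1 hε hε'] at hmono
    exact absurd (h.trans_le hmono) (lt_irrefl _)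
  -- player 1 envy of piece 1 forces a < 3/4 + 3ε
  have hq1b : ENNReal.ofReal (1/2 - ε) ≤ q1 ε (d.pieces 1) := by
    rw [hpj]; exact K8 hε hε' (by linarith)
  have henvy01 := hef 0 1
  rw [show vEg4' ε 0 = q1 ε from rfl] at henvy01
  have hq1p0 : ENNReal.ofReal (1/2 - ε) ≤ q1 ε (d.pieces 0) :=
    hq1b.trans henvy01
  have haSmall : a < 3/4 + 3*ε := by
    by_contra hage
    push_neg at hage
    have hmono : q1 ε (d.pieces 0) ≤ q1 ε (Set.Ioo (3/4 + 3*ε) 1) := by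
      rw [hpi]; exact measure_mono (Set.Ioo_subset_Ioo hage le_rfl)
    rw [K2 hε hε'] at hmono
    have : (1:ℝ)/2 - ε ≤ 1/2 - 2*ε :=
      (ENNReal.ofReal_le_ofReal_iff (by linarith)).mp (hq1p0.trans hmono)
    linarith
  -- final contradiction
  linarith

set_option maxHeartbeats 1000000 in
lemma part2 {ε : ℝ} (hε : 0 < ε) (hε' : ε < 1/100) :
    ∃ y : ConnDiv 4,
      y.pieces 0 = Set.Ioo 0 (2*ε) ∧
      y.pieces 2 = Set.Ioo (2*ε) (1/2) ∧
      y.pieces 1 = Set.Ioo (1/2) (1/2 + ε) ∧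
      y.pieces 3 = Set.Ioo (1/2 + ε) (1 - ε) ∧
      EnvyFree (vEg4' ε) y ∧ ¬ y.Complete ∧
      ENNReal.ofReal (1/2 - 2*ε) ≤ egal (vEg4' ε) y := by
  refine ⟨⟨![Set.Ioo 0 (2*ε), Set.Ioo (1/2) (1/2 + ε), Set.Ioo (2*ε) (1/2),
      Set.Ioo (1/2 + ε) (1 - ε)], ?_, ?_, ?_⟩, rfl, rfl, rfl, rfl, ?_, ?_, ?_⟩
  · intro i; fin_cases i <;> exact ⟨_, _, rfl⟩
  · intro i
    fin_cases i <;>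
      · intro x hx
        obtain ⟨hx1, hx2⟩ := hx
        exact ⟨by linarith, by linarith⟩
  · intro i j hij
    fin_cases i <;> fin_cases j <;>
      first
        | exact absurd rfl hij
        | exact Set.Ioo_disjoint_Ioo.mpr (mm1 _ (by linarith))
        | exact Set.Ioo_disjoint_Ioo.mpr (mm2 _ (by linarith))
  · -- envy-free
    have hsub : ∀ a b : ℝ, 0 ≤ a → b ≤ 1 → Set.Ioo a b ⊆ Set.Icc 0 1 :=
      fun a b ha hb x hx => ⟨by linarith [hx.1], by linarith [hx.2]⟩
    have u0 : qU (Set.Ioo 0 (2*ε)) = ENNReal.ofReal (2*ε - 0) :=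
      qU_Ioo (hsub _ _ le_rfl (by linarith))
    have u1 : qU (Set.Ioo (1/2) (1/2 + ε)) = ENNReal.ofReal (1/2 + ε - 1/2) :=
      qU_Ioo (hsub _ _ (by norm_num) (by linarith))
    have u2 : qU (Set.Ioo (2*ε) (1/2)) = ENNReal.ofReal (1/2 - 2*ε) :=
      qU_Ioo (hsub _ _ (by linarith) (by norm_num))
    have u3 : qU (Set.Ioo (1/2 + ε) (1 - ε)) = ENNReal.ofReal (1 - ε - (1/2 + ε)) :=
      qU_Ioo (hsub _ _ (by linarith) (by linarith))
    intro i j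
    fin_cases i <;> fin_cases j
    · exact le_rfl
    · show q1 ε (Set.Ioo (1/2) (1/2 + ε)) ≤ q1 ε (Set.Ioo 0 (2*ε))
      rw [E3 hε hε']; exact zero_le
    · show q1 ε (Set.Ioo (2*ε) (1/2)) ≤ q1 ε (Set.Ioo 0 (2*ε))
      rw [E2 hε hε']; exact zero_le
    · show q1 ε (Set.Ioo (1/2 + ε) (1 - ε)) ≤ q1 ε (Set.Ioo 0 (2*ε))
      rw [E4 hε hε', E1 hε hε']; exact ENNReal.ofReal_le_ofReal (by linarith)
    · show q2 ε (Set.Ioo 0 (2*ε)) ≤ q2 ε (Set.Ioo (1/2) (1/2 + ε))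
      rw [E5 hε hε', E7 hε hε']; exact ENNReal.ofReal_le_ofReal (by linarith)
    · exact le_rfl
    · show q2 ε (Set.Ioo (2*ε) (1/2)) ≤ q2 ε (Set.Ioo (1/2) (1/2 + ε))
      rw [E6 hε hε', E7 hε hε']; exact ENNReal.ofReal_le_ofReal (by linarith)
    · show q2 ε (Set.Ioo (1/2 + ε) (1 - ε)) ≤ q2 ε (Set.Ioo (1/2) (1/2 + ε))
      rw [E8 hε hε']; exact zero_le
    · show qU (Set.Ioo 0 (2*ε)) ≤ qU (Set.Ioo (2*ε) (1/2))
      rw [u0, u2]; exact ENNReal.ofReal_le_ofReal (by linarith)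
    · show qU (Set.Ioo (1/2) (1/2 + ε)) ≤ qU (Set.Ioo (2*ε) (1/2))
      rw [u1, u2]; exact ENNReal.ofReal_le_ofReal (by linarith)
    · exact le_rfl
    · show qU (Set.Ioo (1/2 + ε) (1 - ε)) ≤ qU (Set.Ioo (2*ε) (1/2))
      rw [u3, u2]; exact ENNReal.ofReal_le_ofReal (by linarith)
    · show qU (Set.Ioo 0 (2*ε)) ≤ qU (Set.Ioo (1/2 + ε) (1 - ε))
      rw [u0, u3]; exact ENNReal.ofReal_le_ofReal (by linarith)
    · show qU (Set.Ioo (1/2) (1/2 + ε)) ≤ qU (Set.Ioo (1/2 + ε) (1 - ε))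
      rw [u1, u3]; exact ENNReal.ofReal_le_ofReal (by linarith)
    · show qU (Set.Ioo (2*ε) (1/2)) ≤ qU (Set.Ioo (1/2 + ε) (1 - ε))
      rw [u2, u3]; exact ENNReal.ofReal_le_ofReal (by linarith)
    · exact le_rfl
  · -- not complete
    intro hcomp
    have hmem : (1 - ε/2 : ℝ) ∈ Set.Icc (0:ℝ) 1 := ⟨by linarith, by linarith⟩
    have := hcomp hmem
    rw [Set.mem_iUnion] at this
    obtain ⟨i, hi⟩ := this
    fin_cases i
    · have hi' : (1 - ε/2 : ℝ) ∈ closure (Set.Ioo 0 (2*ε)) := hi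
      rw [closure_Ioo (by linarith : (0:ℝ) ≠ 2*ε)] at hi'
      have := hi'.2; linarith
    · have hi' : (1 - ε/2 : ℝ) ∈ closure (Set.Ioo (1/2) (1/2 + ε)) := hi
      rw [closure_Ioo (by linarith : (1:ℝ)/2 ≠ 1/2 + ε)] at hi'
      have := hi'.2; linarith
    · have hi' : (1 - ε/2 : ℝ) ∈ closure (Set.Ioo (2*ε) (1/2)) := hi
      rw [closure_Ioo (by linarith : 2*ε ≠ (1:ℝ)/2)] at hi'
      have := hi'.2; linarith
    · have hi' : (1 - ε/2 : ℝ) ∈ closure (Set.Ioo (1/2 + ε) (1 - ε)) := hi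
      rw [closure_Ioo (by linarith : (1:ℝ)/2 + ε ≠ 1 - ε)] at hi'
      have := hi'.2; linarith
  · -- egal lower bound
    have hsub : ∀ a b : ℝ, 0 ≤ a → b ≤ 1 → Set.Ioo a b ⊆ Set.Icc 0 1 :=
      fun a b ha hb x hx => ⟨by linarith [hx.1], by linarith [hx.2]⟩
    rw [egal]
    refine le_iInf fun i => ?_
    fin_cases i
    · show _ ≤ q1 ε (Set.Ioo 0 (2*ε))
      rw [E1 hε hε']; exact ENNReal.ofReal_le_ofReal (by linarith)
    · show _ ≤ q2 ε (Set.Ioo (1/2) (1/2 + ε))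
      rw [E7 hε hε']; exact ENNReal.ofReal_le_ofReal (by linarith)
    · show _ ≤ qU (Set.Ioo (2*ε) (1/2))
      rw [qU_Ioo (hsub (2*ε) (1/2) (by linarith) (by norm_num))]
    · show _ ≤ qU (Set.Ioo (1/2 + ε) (1 - ε))
      rw [qU_Ioo (hsub (1/2 + ε) (1 - ε) (by linarith) (by linarith))]
      exact ENNReal.ofReal_le_ofReal (by linarith)

/-- For 4 players, every envy-free complete connected division has egalitarian
welfare at most `1/4 + 2ε`, while some envy-free partial connected division has
egalitarian welfare at least `1/2 - 2ε`; hence the 4-player egalitarian dumping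
paradox gets arbitrarily close to `2`. -/
theorem egalitarian_dumping_four_players' (ε : ℝ) (hε : 0 < ε) (hε' : ε < 1/100) :
    (∀ d : ConnDiv 4, d.Complete → EnvyFree (vEg4' ε) d →
      egal (vEg4' ε) d ≤ ENNReal.ofReal (1/4 + 2*ε)) ∧
    (∃ y : ConnDiv 4,
      y.pieces 0 = Set.Ioo 0 (2*ε) ∧
      y.pieces 2 = Set.Ioo (2*ε) (1/2) ∧
      y.pieces 1 = Set.Ioo (1/2) (1/2 + ε) ∧
      y.pieces 3 = Set.Ioo (1/2 + ε) (1 - ε) ∧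
      EnvyFree (vEg4' ε) y ∧ ¬ y.Complete ∧
      ENNReal.ofReal (1/2 - 2*ε) ≤ egal (vEg4' ε) y) :=
  ⟨fun d hc hef => part1 hε hε' d hc hef, part2 hε hε'⟩
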